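/- Let G be a finite connected graph, let V_1, …, V_t be the orbits of the natural action of Aut(G) on V(G), and let {F_1, …, F_k} be a partition of E(G) coarser than the Θ*-partition. Then Ŵ(G) = |V(G)| · Σ_{i=1}^{t} (1/|V_i|) · Σ_{j=1}^{k} W(G/F_j, w_{ij}), where w_{ij}(C) = |V_i ∩ C| for every vertex C of G/F_j (i.e. for every connected component C of G − F_j). -/

import Mathlib

open SimpleGraph

variable {V : Type*}

/-- The Djoković–Winkler relation Θ on edges of `G`. -/
def djokovicWinkler (G : SimpleGraph V) (e₁ e₂ : Sym2 V) : Prop :=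
  e₁ ∈ G.edgeSet ∧ e₂ ∈ G.edgeSet ∧
    ∃ u₁ v₁ u₂ v₂, e₁ = s(u₁, v₁) ∧ e₂ = s(u₂, v₂) ∧
      G.dist u₁ u₂ + G.dist v₁ v₂ ≠ G.dist u₁ v₂ + G.dist v₁ u₂

/-- Θ*, the transitive closure of the relation Θ. -/
def thetaStar (G : SimpleGraph V) : Sym2 V → Sym2 V → Prop :=
  Relation.TransGen (djokovicWinkler G)

/-- The quotient graph `G / F`: its vertices are the connected components of `G - F`,
two components being adjacent if some vertex of one is adjacent in `G` to some
vertex of the other. -/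
def quotientGraph (G : SimpleGraph V) (F : Set (Sym2 V)) :
    SimpleGraph (G.deleteEdges F).ConnectedComponent where
  Adj C D := C ≠ D ∧ ∃ x y : V, G.Adj x y ∧
    (G.deleteEdges F).connectedComponentMk x = C ∧
    (G.deleteEdges F).connectedComponentMk y = D
  symm := by
    refine ⟨?_⟩
    rintro C D ⟨hne, x, y, hadj, hx, hy⟩
    exact ⟨hne.symm, y, x, hadj.symm, hy, hx⟩
  loopless := by refine ⟨?_⟩; rintro C ⟨hne, -⟩; exact hne rfl

/-- The orbit of a vertex `u` under the natural action of `Aut(G)` on `V(G)`. -/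
def graphOrbit (G : SimpleGraph V) (u : V) : Set V :=
  {v | ∃ α : G ≃g G, α u = v}

/-- The Graovac–Pisanski index
`Ŵ(G) = (|V(G)| / (2|Aut(G)|)) ∑_{u ∈ V(G)} ∑_{α ∈ Aut(G)} d_G(u, α(u))`. -/
noncomputable def graovacPisanski [Fintype V] (G : SimpleGraph V) : ℝ :=
  ((Fintype.card V : ℝ) / (2 * (Nat.card (G ≃g G) : ℝ))) *
    ∑ u : V, ∑ᶠ α : G ≃g G, (G.dist u (α u) : ℝ)

/-- The vertex-weighted Wiener index
`W(H, w) = ½ ∑_{u ∈ V(H)} ∑_{v ∈ V(H)} w(u) w(v) d_H(u,v)`. -/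
noncomputable def weightedWiener {W : Type*} (H : SimpleGraph W) (w : W → ℝ) : ℝ :=
  (1 / 2) * ∑ᶠ u : W, ∑ᶠ v : W, w u * w v * (H.dist u v : ℝ)

namespace GPaux

variable (G : SimpleGraph V) (F : Set (Sym2 V))

/-- `F` is closed under the relation Θ. -/
def ThetaClosed : Prop := ∀ ⦃e⦄, e ∈ F → ∀ ⦃f⦄, djokovicWinkler G e f → f ∈ F

lemma dw_symm {e f : Sym2 V} (h : djokovicWinkler G e f) : djokovicWinkler G f e := by
  obtain ⟨he, hf, u₁, v₁, u₂, v₂, h1, h2, hne⟩ := h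
  refine ⟨hf, he, u₂, v₂, u₁, v₁, h2, h1, ?_⟩
  have c1 : G.dist u₂ u₁ = G.dist u₁ u₂ := SimpleGraph.dist_comm
  have c2 : G.dist v₂ v₁ = G.dist v₁ v₂ := SimpleGraph.dist_comm
  have c3 : G.dist u₂ v₁ = G.dist v₁ u₂ := SimpleGraph.dist_comm
  have c4 : G.dist v₂ u₁ = G.dist u₁ v₂ := SimpleGraph.dist_comm
  omega

lemma dw_mk {x y z w : V} (h1 : G.Adj x y) (h2 : G.Adj z w)
    (hne : G.dist x z + G.dist y w ≠ G.dist x w + G.dist y z) :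
    djokovicWinkler G s(x, y) s(z, w) :=
  ⟨h1, h2, x, y, z, w, rfl, rfl, hne⟩

lemma eq_of_not_dw {x y z w : V} (h1 : G.Adj x y) (h2 : G.Adj z w)
    (h : ¬ djokovicWinkler G s(x, y) s(z, w)) :
    G.dist x z + G.dist y w = G.dist x w + G.dist y z := by
  by_contra hne
  exact h (dw_mk G h1 h2 hne)

/-- weight of a crossing step -/
noncomputable def cW (z x y : V) : ℤ :=
  letI := Classical.propDecidable
  if s(x, y) ∈ F then (G.dist y z : ℤ) - (G.dist x z : ℤ) else 0

/-- crossing indicator -/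
noncomputable def cI (x y : V) : ℕ :=
  letI := Classical.propDecidable
  if s(x, y) ∈ F then 1 else 0

lemma cW_eq_neg (z x y : V) : cW G F z x y = - cW G F z y x := by
  unfold cW
  rw [Sym2.eq_swap]
  split <;> ring

/-- signed crossing sum along a walk -/
noncomputable def cSum (z : V) : ∀ {u v : V}, G.Walk u v → ℤ
  | _, _, .nil => 0
  | u, _, .cons (v := x) _ p => cW G F z u x + cSum z p

/-- crossing count along a walk -/
noncomputable def cCount : ∀ {u v : V}, G.Walk u v → ℕ
  | _, _, .nil => 0
  | u, _, .cons (v := x) _ p => cI F u x + cCount p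

@[simp] lemma cSum_nil {u z : V} : cSum G F z (.nil : G.Walk u u) = 0 := rfl

@[simp] lemma cSum_cons {u x v z : V} (h : G.Adj u x) (p : G.Walk x v) :
    cSum G F z (.cons h p) = cW G F z u x + cSum G F z p := rfl

@[simp] lemma cCount_nil {u : V} : cCount G F (.nil : G.Walk u u) = 0 := rfl

@[simp] lemma cCount_cons {u x v : V} (h : G.Adj u x) (p : G.Walk x v) :
    cCount G F (.cons h p) = cI F u x + cCount G F p := rfl

lemma cSum_append (z : V) {u v w : V} (p : G.Walk u v) (q : G.Walk v w) :
    cSum G F z (p.append q) = cSum G F z p + cSum G F z q := by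
  induction p with
  | nil => simp
  | cons h p ih => simp [Walk.cons_append, ih]; ring

lemma cCount_append {u v w : V} (p : G.Walk u v) (q : G.Walk v w) :
    cCount G F (p.append q) = cCount G F p + cCount G F q := by
  induction p with
  | nil => simp
  | cons h p ih => simp [Walk.cons_append, ih]; ring

lemma cSum_reverse (z : V) {u v : V} (p : G.Walk u v) :
    cSum G F z p.reverse = - cSum G F z p := by
  induction p with
  | nil => simp
  | cons h p ih =>
    rw [Walk.reverse_cons, cSum_append, ih, cSum_cons, cSum_cons, cSum_nil,
      cW_eq_neg]
    ring

lemma cSum_copy (z : V) {u v u' v' : V} (p : G.Walk u v) (hu : u = u') (hv : v = v') :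
    cSum G F z (p.copy hu hv) = cSum G F z p := by subst hu; subst hv; rfl

lemma cCount_copy {u v u' v' : V} (p : G.Walk u v) (hu : u = u') (hv : v = v') :
    cCount G F (p.copy hu hv) = cCount G F p := by subst hu; subst hv; rfl

lemma cSum_eq_sum_range (z : V) {u v : V} (p : G.Walk u v) :
    cSum G F z p = ∑ i ∈ Finset.range p.length,
      cW G F z (p.getVert i) (p.getVert (i + 1)) := by
  induction p with
  | nil => simp
  | cons h p ih =>
    rw [Walk.length_cons, Finset.sum_range_succ', cSum_cons, ih]
    simp only [Walk.getVert_cons_succ, Walk.getVert_zero]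
    ring

lemma cSum_le_cCount (hG : G.Connected) (z : V) {u v : V} (p : G.Walk u v) :
    cSum G F z p ≤ (cCount G F p : ℤ) := by
  induction p with
  | nil => simp
  | @cons a b c h p ih =>
    rw [cSum_cons, cCount_cons]
    push_cast
    have hab : G.dist a b ≤ 1 := le_trans (G.dist_le (Walk.cons h Walk.nil)) (by simp)
    have hle : G.dist b z ≤ G.dist a z + 1 := by
      calc G.dist b z ≤ G.dist b a + G.dist a z := hG.dist_triangle
        _ ≤ G.dist a z + 1 := by rw [SimpleGraph.dist_comm]; omega
    unfold cW cI
    split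
    · push_cast; omega
    · simp only [Nat.cast_zero, add_zero]
      omega


/-! ### z-invariance of `cSum` on closed walks -/

lemma cSum_eq_of_adj_mem (hF : ThetaClosed G F) {z z' : V} (hzz' : G.Adj z z')
    (hmem : s(z, z') ∈ F) {u v : V} (p : G.Walk u v) :
    cSum G F z p - cSum G F z' p =
      ((G.dist v z : ℤ) - (G.dist v z' : ℤ)) - ((G.dist u z : ℤ) - (G.dist u z' : ℤ)) := by
  induction p with
  | nil => simp
  | @cons a b c h p ih =>
    rw [cSum_cons, cSum_cons]
    have key : cW G F z a b - cW G F z' a b =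
        ((G.dist b z : ℤ) - (G.dist b z' : ℤ)) - ((G.dist a z : ℤ) - (G.dist a z' : ℤ)) := by
      unfold cW
      split
      · push_cast; ring
      · rename_i hnab
        have hndw : ¬ djokovicWinkler G s(z, z') s(a, b) := fun hdw => hnab (hF hmem hdw)
        have heq := eq_of_not_dw G hzz' h hndw
        have c1 : G.dist z a = G.dist a z := SimpleGraph.dist_comm
        have c2 : G.dist z' b = G.dist b z' := SimpleGraph.dist_comm
        have c3 : G.dist z b = G.dist b z := SimpleGraph.dist_comm
        have c4 : G.dist z' a = G.dist a z' := SimpleGraph.dist_comm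
        push_cast
        omega
    omega

lemma cSum_eq_of_adj_not_mem (hF : ThetaClosed G F) {z z' : V} (hzz' : G.Adj z z')
    (hmem : s(z, z') ∉ F) {u v : V} (p : G.Walk u v) :
    cSum G F z p = cSum G F z' p := by
  induction p with
  | nil => simp
  | @cons a b c h p ih =>
    rw [cSum_cons, cSum_cons, ih]
    congr 1
    unfold cW
    split
    · rename_i hab
      have hndw : ¬ djokovicWinkler G s(a, b) s(z, z') := fun hdw => hmem (hF hab hdw)
      have heq := eq_of_not_dw G h hzz' hndw
      have c1 : G.dist a z = G.dist a z := rfl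
      have c2 : G.dist b z' = G.dist b z' := rfl
      push_cast
      omega
    · rfl

lemma cSum_closed_adj (hF : ThetaClosed G F) {z z' : V} (hzz' : G.Adj z z')
    {v : V} (p : G.Walk v v) : cSum G F z p = cSum G F z' p := by
  by_cases hmem : s(z, z') ∈ F
  · have := cSum_eq_of_adj_mem G F hF hzz' hmem p
    omega
  · exact cSum_eq_of_adj_not_mem G F hF hzz' hmem p

lemma cSum_closed_invariant (hG : G.Connected) (hF : ThetaClosed G F) (z z' : V)
    {v : V} (p : G.Walk v v) : cSum G F z p = cSum G F z' p := by
  obtain ⟨w⟩ := hG.preconnected z z'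
  induction w with
  | nil => rfl
  | @cons a b c h q ih =>
    exact (cSum_closed_adj G F hF h p).trans ih

/-! ### take and drop -/

def Wtake : ∀ {u v : V}, (p : G.Walk u v) → (n : ℕ) → G.Walk u (p.getVert n)
  | _, _, .nil, _ => .nil
  | _, _, .cons h q, 0 => Walk.nil.copy rfl ((Walk.cons h q).getVert_zero).symm
  | _, _, .cons h q, (n + 1) =>
      (Walk.cons h (Wtake q n)).copy rfl (Walk.getVert_cons_succ q h).symm

lemma length_Wtake : ∀ {u v : V} (p : G.Walk u v) (n : ℕ),
    (Wtake G p n).length = min n p.length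
  | _, _, .nil, n => by simp [Wtake]
  | _, _, .cons h q, 0 => by simp [Wtake]
  | _, _, .cons h q, (n + 1) => by
      simp [Wtake, length_Wtake q n, Nat.succ_min_succ]

lemma getVert_Wtake : ∀ {u v : V} (p : G.Walk u v) (n i : ℕ), i ≤ n →
    (Wtake G p n).getVert i = p.getVert i
  | _, _, .nil, n, i, _ => by
      cases i <;> simp [Wtake, Walk.getVert]
  | _, _, .cons h q, 0, i, hi => by
      obtain rfl : i = 0 := by omega
      simp [Wtake]
  | _, _, .cons h q, (n + 1), i, hi => by
      match i, hi with
      | 0, _ => simp [Wtake]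
      | (i + 1), hi =>
        simp only [Wtake, Walk.getVert_copy, Walk.getVert_cons_succ]
        exact getVert_Wtake q n i (by omega)

lemma length_drop' : ∀ {u v : V} (p : G.Walk u v) (n : ℕ),
    (p.drop n).length = p.length - n
  | _, _, .nil, n => by simp [Walk.drop]
  | _, _, .cons h q, 0 => by simp [Walk.drop]
  | _, _, .cons h q, (n + 1) => by
      simp [Walk.drop, length_drop' q n]

lemma getVert_drop' : ∀ {u v : V} (p : G.Walk u v) (n i : ℕ),
    (p.drop n).getVert i = p.getVert (n + i)
  | _, _, .nil, n, i => by cases i <;> cases n <;> simp [Walk.drop, Walk.getVert]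
  | _, _, .cons h q, 0, i => by simp [Walk.drop]
  | _, _, .cons h q, (n + 1), i => by
      simp only [Walk.drop, Walk.getVert_copy]
      exact (getVert_drop' q n i).trans
        (by rw [show n + 1 + i = (n + i) + 1 from by omega, Walk.getVert_cons_succ])

lemma cSum_take_drop (z : V) : ∀ {u v : V} (p : G.Walk u v) (n : ℕ),
    cSum G F z (Wtake G p n) + cSum G F z (p.drop n) = cSum G F z p
  | _, _, .nil, n => by simp [Wtake, Walk.drop]
  | _, _, .cons h q, 0 => by
      simp [Wtake, Walk.drop, cSum_copy]
  | _, _, .cons h q, (n + 1) => by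
      simp only [Wtake, Walk.drop, cSum_copy, cSum_cons]
      rw [← cSum_take_drop z q n]
      exact add_assoc _ _ _


/-! ### The key theorem: `cSum` vanishes on closed walks -/

theorem cSum_closed_eq_zero (hG : G.Connected) (hF : ThetaClosed G F) :
    ∀ (n : ℕ) {v : V} (p : G.Walk v v), p.length = n → ∀ z, cSum G F z p = 0 := by
  intro n
  induction n using Nat.strong_induction_on with
  | _ n IH =>
  intro v p hlen z
  rcases Nat.eq_zero_or_pos n with hn0 | hn1
  · subst hn0
    rw [(Walk.length_eq_zero_iff.mp hlen).eq_nil]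
    simp
  by_cases hcut : ∃ i j, i < j ∧ j ≤ n ∧
      G.dist (p.getVert i) (p.getVert j) < j - i ∧
      G.dist (p.getVert i) (p.getVert j) < n - (j - i)
  · -- splice a geodesic shortcut and use the inductive hypothesis
    obtain ⟨i, j, hij, hjn, hd1, hd2⟩ := hcut
    obtain ⟨geo, hgeo⟩ := hG.exists_walk_length_eq_dist (p.getVert i) (p.getVert j)
    have hgv : (Wtake G p j).getVert i = p.getVert i :=
      getVert_Wtake G p j i (le_of_lt hij)
    set p₁ : G.Walk v (p.getVert j) := Wtake G p j with hp₁
    set p₂ : G.Walk (p.getVert j) v := p.drop j with hp₂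
    set p₁₁ : G.Walk v (p.getVert i) := (Wtake G p₁ i).copy rfl hgv with hp₁₁
    set p₁₂ : G.Walk (p.getVert i) (p.getVert j) := (p₁.drop i).copy hgv rfl with hp₁₂
    have hlen₁ : p₁.length = j := by
      rw [hp₁, length_Wtake, hlen]; omega
    have hC₁ : (p₁₂.append geo.reverse).length < n := by
      rw [Walk.length_append, Walk.length_reverse, hgeo, hp₁₂, Walk.length_copy,
        length_drop', hlen₁]
      omega
    have hC₂ : (geo.append (p₂.append p₁₁)).length < n := by
      rw [Walk.length_append, Walk.length_append, hgeo, hp₂, length_drop', hlen,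
        hp₁₁, Walk.length_copy, length_Wtake, hlen₁]
      omega
    have e₁ := IH _ hC₁ (p₁₂.append geo.reverse) rfl z
    have e₂ := IH _ hC₂ (geo.append (p₂.append p₁₁)) rfl z
    rw [cSum_append, cSum_reverse] at e₁
    rw [cSum_append, cSum_append] at e₂
    have hsplit : cSum G F z p₁ + cSum G F z p₂ = cSum G F z p := cSum_take_drop G F z p j
    have hsplit₁ : cSum G F z p₁₁ + cSum G F z p₁₂ = cSum G F z p₁ := by
      rw [hp₁₁, hp₁₂, cSum_copy, cSum_copy]
      exact cSum_take_drop G F z p₁ i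
    omega
  · -- the walk is an isometric cycle
    push_neg at hcut
    have hIso : ∀ i j, i ≤ j → j ≤ n →
        G.dist (p.getVert i) (p.getVert j) = min (j - i) (n - (j - i)) := by
      intro i j hij hjn
      rcases eq_or_lt_of_le hij with rfl | hij'
      · simp
      have hle1 : G.dist (p.getVert i) (p.getVert j) ≤ j - i := by
        have hW : ((p.drop i).getVert (j - i)) = p.getVert j := by
          rw [getVert_drop']; congr 1; omega
        have := G.dist_le (Wtake G (p.drop i) (j - i))
        rw [length_Wtake, length_drop', hlen] at this
        rw [← hW]
        exact le_trans this (by omega)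
      have hle2 : G.dist (p.getVert i) (p.getVert j) ≤ n - j + i := by
        have := G.dist_le ((p.drop j).append (Wtake G p i))
        rw [Walk.length_append, length_drop', length_Wtake, hlen] at this
        rw [SimpleGraph.dist_comm]
        exact le_trans this (by omega)
      have := hcut i j hij' hjn
      omega
    -- reduce to z = v
    rw [cSum_closed_invariant G F hG hF z v p]
    have hgvn : p.getVert n = v := by rw [← hlen]; exact p.getVert_length
    have hadj : ∀ i, i < n → G.Adj (p.getVert i) (p.getVert (i + 1)) := by
      intro i hi
      exact p.adj_getVert_succ (by rw [hlen]; exact hi)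
    have hd : ∀ i, i ≤ n → G.dist (p.getVert i) v = min (n - i) i := by
      intro i hi
      have := hIso i n hi le_rfl
      rw [hgvn] at this
      rw [this]
      congr 1
      omega
    have hterm : ∀ i, i < n → cW G F v (p.getVert i) (p.getVert (i + 1)) =
        (letI := Classical.propDecidable
         if s(p.getVert i, p.getVert (i + 1)) ∈ F then
          ((min (n - (i + 1)) (i + 1) : ℕ) : ℤ) - ((min (n - i) i : ℕ) : ℤ) else 0) := by
      intro i hi
      unfold cW
      rw [hd i (by omega), hd (i + 1) (by omega)]
    rw [cSum_eq_sum_range, hlen]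
    -- Θ-relations between edges of the isometric cycle
    have hdw : ∀ a b : ℕ, a < b → b + 1 ≤ n →
        G.dist (p.getVert a) (p.getVert b) + G.dist (p.getVert (a+1)) (p.getVert (b+1)) ≠
        G.dist (p.getVert a) (p.getVert (b+1)) + G.dist (p.getVert (a+1)) (p.getVert b) →
        (s(p.getVert a, p.getVert (a+1)) ∈ F ↔ s(p.getVert b, p.getVert (b+1)) ∈ F) := by
      intro a b hab hbn hne
      have hdwab : djokovicWinkler G s(p.getVert a, p.getVert (a+1))
          s(p.getVert b, p.getVert (b+1)) :=
        dw_mk G (hadj a (by omega)) (hadj b (by omega)) hne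
      exact ⟨fun hmem => hF hmem hdwab, fun hmem => hF hmem (dw_symm G hdwab)⟩
    rcases Nat.even_or_odd n with ⟨k, hk⟩ | ⟨k, hk⟩
    · -- even case: antipodal pairing
      have hk1 : 1 ≤ k := by omega
      have pair : ∀ i, i < k →
          (s(p.getVert i, p.getVert (i+1)) ∈ F ↔
           s(p.getVert (k+i), p.getVert (k+i+1)) ∈ F) := by
        intro i hik
        apply hdw i (k+i) (by omega) (by omega)
        have d1 := hIso i (k+i) (by omega) (by omega)
        have d2 := hIso (i+1) (k+i+1) (by omega) (by omega)
        have d3 := hIso i (k+i+1) (by omega) (by omega)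
        have d4 := hIso (i+1) (k+i) (by omega) (by omega)
        omega
      rw [hk, Finset.sum_range_add, ← Finset.sum_add_distrib]
      apply Finset.sum_eq_zero
      intro i hik
      rw [Finset.mem_range] at hik
      rw [hterm i (by omega), hterm (k+i) (by omega)]
      by_cases hEi : s(p.getVert i, p.getVert (i+1)) ∈ F
      · have hEki := (pair i hik).mp hEi
        simp only [hEi, hEki, if_true]
        have m1 : min (n - (i+1)) (i+1) = i + 1 := by omega
        have m2 : min (n - i) i = i := by omega
        have m3 : min (n - (k+i+1)) (k+i+1) = k - i - 1 := by omega
        have m4 : min (n - (k+i)) (k+i) = k - i := by omega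
        rw [m1, m2, m3, m4]
        push_cast [Nat.cast_sub]
        omega
      · have hEki : s(p.getVert (k+i), p.getVert (k+i+1)) ∉ F :=
          fun h => hEi ((pair i hik).mpr h)
        rw [if_neg hEi, if_neg hEki]
        norm_num
    · -- odd case: all edges equivalent, telescoping sum
      have hk1 : 1 ≤ k := by
        rcases Nat.eq_zero_or_pos k with rfl | h
        · exfalso
          have h01 := hadj 0 (by omega)
          have : p.getVert 1 = v := by rw [show (1:ℕ) = n from by omega]; exact hgvn
          rw [p.getVert_zero, this] at h01
          exact G.irrefl h01
        · exact h
      have A : ∀ i, i ≤ k →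
          (s(p.getVert i, p.getVert (i+1)) ∈ F ↔
           s(p.getVert (k+i), p.getVert (k+i+1)) ∈ F) := by
        intro i hik
        apply hdw i (k+i) (by omega) (by omega)
        have d1 := hIso i (k+i) (by omega) (by omega)
        have d2 := hIso (i+1) (k+i+1) (by omega) (by omega)
        have d3 := hIso i (k+i+1) (by omega) (by omega)
        have d4 := hIso (i+1) (k+i) (by omega) (by omega)
        omega
      have A' : ∀ j, k ≤ j → j ≤ 2*k →
          (s(p.getVert (j-k), p.getVert (j-k+1)) ∈ F ↔
           s(p.getVert j, p.getVert (j+1)) ∈ F) := by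
        intro j hkj hj2k
        apply hdw (j-k) j (by omega) (by omega)
        have d1 := hIso (j-k) j (by omega) (by omega)
        have d2 := hIso (j-k+1) (j+1) (by omega) (by omega)
        have d3 := hIso (j-k) (j+1) (by omega) (by omega)
        have d4 := hIso (j-k+1) j (by omega) (by omega)
        omega
      have B' : ∀ j, k ≤ j → j < 2*k →
          (s(p.getVert (j-k), p.getVert (j-k+1)) ∈ F ↔
           s(p.getVert (j+1), p.getVert (j+1+1)) ∈ F) := by
        intro j hkj hj2k
        apply hdw (j-k) (j+1) (by omega) (by omega)
        have d1 := hIso (j-k) (j+1) (by omega) (by omega)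
        have d2 := hIso (j-k+1) (j+1+1) (by omega) (by omega)
        have d3 := hIso (j-k) (j+1+1) (by omega) (by omega)
        have d4 := hIso (j-k+1) (j+1) (by omega) (by omega)
        omega
      have D : ∀ j, k ≤ j → j ≤ 2*k →
          (s(p.getVert k, p.getVert (k+1)) ∈ F ↔
           s(p.getVert j, p.getVert (j+1)) ∈ F) := by
        intro j hkj
        induction j, hkj using Nat.le_induction with
        | base => intro _; rfl
        | succ j hkj ihj =>
          intro hj2k
          exact ((ihj (by omega)).trans (A' j hkj (by omega)).symm).trans
            (B' j hkj (by omega))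
      have All : ∀ i, i < n →
          (s(p.getVert i, p.getVert (i+1)) ∈ F ↔
           s(p.getVert k, p.getVert (k+1)) ∈ F) := by
        intro i hi
        rcases le_or_gt i k with hik | hik
        · exact (A i hik).trans (D (k+i) (by omega) (by omega)).symm
        · exact (D i (by omega) (by omega)).symm
      by_cases hEk : s(p.getVert k, p.getVert (k+1)) ∈ F
      · have hsum : ∀ i ∈ Finset.range n,
            cW G F v (p.getVert i) (p.getVert (i + 1)) =
            ((min (n - (i + 1)) (i + 1) : ℕ) : ℤ) - ((min (n - i) i : ℕ) : ℤ) := by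
          intro i hi
          rw [Finset.mem_range] at hi
          rw [hterm i hi]
          simp only [(All i hi).mpr hEk, if_true]
        rw [Finset.sum_congr rfl hsum, Finset.sum_range_sub
          (fun j => ((min (n - j) j : ℕ) : ℤ))]
        simp
      · apply Finset.sum_eq_zero
        intro i hi
        rw [Finset.mem_range] at hi
        rw [hterm i hi]
        exact if_neg (fun h => hEk ((All i hi).mp h))


/-! ### Quotient graph lemmas -/

/-- abbreviation for the component map -/
def ccm (x : V) : (G.deleteEdges F).ConnectedComponent :=
  (G.deleteEdges F).connectedComponentMk x

lemma cc_eq_of_adj_not_mem {x y : V} (h : G.Adj x y) (hm : s(x, y) ∉ F) :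
    ccm G F x = ccm G F y :=
  ConnectedComponent.sound ⟨Walk.cons (SimpleGraph.deleteEdges_adj.mpr ⟨h, hm⟩) Walk.nil⟩

lemma quotient_reachable {x y : V} (p : G.Walk x y) :
    (quotientGraph G F).Reachable (ccm G F x) (ccm G F y) := by
  induction p with
  | nil => exact Reachable.refl _
  | @cons a b c h q ih =>
    by_cases hab : ccm G F a = ccm G F b
    · rwa [hab]
    · exact (Adj.reachable (show (quotientGraph G F).Adj (ccm G F a) (ccm G F b) from
        ⟨hab, a, b, h, rfl, rfl⟩)).trans ih

lemma quotient_connected (hG : G.Connected) : (quotientGraph G F).Connected := by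
  have hne : Nonempty V := hG.nonempty
  have hnec : Nonempty ((G.deleteEdges F).ConnectedComponent) :=
    Nonempty.intro (ccm G F (Classical.arbitrary V))
  rw [SimpleGraph.connected_iff]
  refine ⟨?_, hnec⟩
  intro C D
  induction C using ConnectedComponent.ind with
  | _ x =>
  induction D using ConnectedComponent.ind with
  | _ y =>
  obtain ⟨p⟩ := hG.preconnected x y
  exact quotient_reachable G F p

lemma quotient_dist_le_cCount (hG : G.Connected) {x y : V} (p : G.Walk x y) :
    (quotientGraph G F).dist (ccm G F x) (ccm G F y) ≤ cCount G F p := by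
  induction p with
  | nil => simp
  | @cons a b c h q ih =>
    rw [cCount_cons]
    by_cases hab : ccm G F a = ccm G F b
    · rw [hab]
      unfold cI
      split <;> omega
    · have hadj : (quotientGraph G F).Adj (ccm G F a) (ccm G F b) := ⟨hab, a, b, h, rfl, rfl⟩
      have htri := (quotient_connected G F hG).dist_triangle
        (u := ccm G F a) (v := ccm G F b) (w := ccm G F c)
      have h1 : (quotientGraph G F).dist (ccm G F a) (ccm G F b) ≤ 1 := by
        have := (quotientGraph G F).dist_le (Walk.cons hadj Walk.nil)
        simpa using this
      unfold cI
      split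
      · omega
      · rename_i hmm
        exfalso
        exact hab (cc_eq_of_adj_not_mem G F h hmm)

lemma exists_walk_cCount_zero {x y : V} (q : (G.deleteEdges F).Walk x y) :
    ∃ p : G.Walk x y, cCount G F p = 0 := by
  induction q with
  | nil => exact ⟨Walk.nil, rfl⟩
  | @cons a b c h q ih =>
    obtain ⟨p, hp⟩ := ih
    refine ⟨Walk.cons (SimpleGraph.deleteEdges_adj.mp h).1 p, ?_⟩
    rw [cCount_cons, hp]
    unfold cI
    rw [if_neg (SimpleGraph.deleteEdges_adj.mp h).2]

lemma exists_walk_cCount_le :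
    ∀ {C D} (w : (quotientGraph G F).Walk C D) (x y : V), ccm G F x = C → ccm G F y = D →
      ∃ p : G.Walk x y, cCount G F p ≤ w.length := by
  intro C D w
  induction w with
  | nil =>
    intro x y hx hy
    have hr : (G.deleteEdges F).Reachable x y := ConnectedComponent.exact (hx.trans hy.symm)
    obtain ⟨q⟩ := hr
    obtain ⟨p, hp⟩ := exists_walk_cCount_zero G F q
    exact ⟨p, by omega⟩
  | @cons C C' D hCC' w ih =>
    intro x y hx hy
    obtain ⟨hne, a, b, hab, ha, hb⟩ := hCC'
    have hr : (G.deleteEdges F).Reachable x a := ConnectedComponent.exact (hx.trans ha.symm)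
    obtain ⟨q⟩ := hr
    obtain ⟨p₀, hp₀⟩ := exists_walk_cCount_zero G F q
    obtain ⟨p', hp'⟩ := ih b y hb hy
    refine ⟨p₀.append (Walk.cons hab p'), ?_⟩
    rw [cCount_append, hp₀, cCount_cons]; show _ ≤ w.length + 1
    unfold cI
    split <;> omega

/-- The crucial inequality: crossing an `F`-edge `ab` lying on a geodesic from `z`
strictly increases the quotient distance to `z`. -/
lemma quotient_dist_key (hG : G.Connected) (hF : ThetaClosed G F) {a b z : V}
    (hab : G.Adj a b) (hm : s(a, b) ∈ F) (hdz : G.dist z a = G.dist z b + 1) :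
    (quotientGraph G F).dist (ccm G F b) (ccm G F z) + 1 ≤ (quotientGraph G F).dist (ccm G F a) (ccm G F z) := by
  obtain ⟨P, hP⟩ := hG.exists_walk_length_eq_dist z b
  -- distances along the geodesic
  have hpre : ∀ i, i ≤ P.length → G.dist z (P.getVert i) = i := by
    intro i hi
    have hle : G.dist z (P.getVert i) ≤ i := by
      have := G.dist_le (Wtake G P i)
      rw [length_Wtake] at this
      exact le_trans this (by omega)
    have hge : G.dist z b ≤ G.dist z (P.getVert i) + (P.length - i) := by
      have h2 := G.dist_le (P.drop i)
      rw [length_drop'] at h2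
      calc G.dist z b ≤ G.dist z (P.getVert i) + G.dist (P.getVert i) b := hG.dist_triangle
        _ ≤ _ := by omega
    omega
  have hσP : cSum G F z P = (cCount G F P : ℤ) := by
    have hcc : ∀ {u v : V} (q : G.Walk u v), cCount G F q =
        ∑ i ∈ Finset.range q.length, cI F (q.getVert i) (q.getVert (i + 1)) := by
      intro u v q
      induction q with
      | nil => simp
      | cons h q ih =>
        rw [Walk.length_cons, Finset.sum_range_succ', cCount_cons, ih]
        simp only [Walk.getVert_cons_succ, Walk.getVert_zero]
        ring
    rw [cSum_eq_sum_range, hcc P]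
    push_cast
    apply Finset.sum_congr rfl
    intro i hi
    rw [Finset.mem_range] at hi
    unfold cW cI
    have e1 : G.dist (P.getVert (i+1)) z = i + 1 := by
      rw [SimpleGraph.dist_comm]; exact hpre (i+1) (by omega)
    have e2 : G.dist (P.getVert i) z = i := by
      rw [SimpleGraph.dist_comm]; exact hpre i (by omega)
    split
    · rw [e1, e2]; push_cast; ring
    · simp
  have hkP : ((quotientGraph G F).dist (ccm G F z) (ccm G F b) : ℤ) ≤ cSum G F z P := by
    rw [hσP]
    exact_mod_cast quotient_dist_le_cCount G F hG P
  -- extend along the edge b → a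
  set W' : G.Walk z a := P.append (Walk.cons hab.symm Walk.nil) with hW'
  have hσW' : cSum G F z W' = cSum G F z P + 1 := by
    rw [hW', cSum_append, cSum_cons, cSum_nil]
    unfold cW
    rw [if_pos (by rwa [Sym2.eq_swap])]
    have c1 : G.dist a z = G.dist z a := SimpleGraph.dist_comm
    have c2 : G.dist b z = G.dist z b := SimpleGraph.dist_comm
    push_cast
    omega
  -- a lifted quotient geodesic from z to a
  obtain ⟨w, hw⟩ := (quotient_connected G F hG).exists_walk_length_eq_dist (ccm G F z) (ccm G F a)
  obtain ⟨p, hp⟩ := exists_walk_cCount_le G F w z a rfl rfl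
  have hindep : cSum G F z p = cSum G F z W' := by
    have hclosed := cSum_closed_eq_zero G F hG hF (p.append W'.reverse).length
      (p.append W'.reverse) rfl z
    rw [cSum_append, cSum_reverse] at hclosed
    omega
  have hfinal : ((quotientGraph G F).dist (ccm G F z) (ccm G F b) : ℤ) + 1 ≤
      ((quotientGraph G F).dist (ccm G F z) (ccm G F a) : ℤ) := by
    calc ((quotientGraph G F).dist (ccm G F z) (ccm G F b) : ℤ) + 1
        ≤ cSum G F z P + 1 := by omega
      _ = cSum G F z p := by rw [hindep, hσW']
      _ ≤ (cCount G F p : ℤ) := cSum_le_cCount G F hG z p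
      _ ≤ (w.length : ℤ) := by exact_mod_cast hp
      _ = _ := by rw [hw]
  have c1 : (quotientGraph G F).dist (ccm G F z) (ccm G F b) = (quotientGraph G F).dist (ccm G F b) (ccm G F z) :=
    SimpleGraph.dist_comm
  have c2 : (quotientGraph G F).dist (ccm G F z) (ccm G F a) = (quotientGraph G F).dist (ccm G F a) (ccm G F z) :=
    SimpleGraph.dist_comm
  omega


/-! ### The canonical-embedding distance formula -/

theorem dist_eq_sum_quotient_dist (hG : G.Connected) {kk : ℕ} (Fs : Fin kk → Set (Sym2 V))
    (hdisj : ∀ j j', j ≠ j' → Disjoint (Fs j) (Fs j'))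
    (hcover : ⋃ j, Fs j = G.edgeSet)
    (hF : ∀ j, ThetaClosed G (Fs j)) :
    ∀ (n : ℕ) (u v : V), G.dist u v = n →
      (G.dist u v : ℤ) =
        ∑ j : Fin kk, ((quotientGraph G (Fs j)).dist (ccm G (Fs j) u) (ccm G (Fs j) v) : ℤ) := by
  intro n
  induction n using Nat.strong_induction_on with
  | _ n IH =>
  intro u v hn
  rcases Nat.eq_zero_or_pos n with rfl | hpos
  · have huv : u = v := (hG.dist_eq_zero_iff).mp hn
    subst huv
    simp [SimpleGraph.dist_self]
  obtain ⟨p, hp⟩ := hG.exists_walk_length_eq_dist u v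
  rw [hn] at hp
  cases p with
  | nil => simp at hp; omega
  | @cons _ w _ h q =>
    rw [Walk.length_cons] at hp
    have hqv : G.dist w v = n - 1 := by
      have h1 : G.dist w v ≤ n - 1 := by
        have := G.dist_le q
        omega
      have h2 : G.dist u v ≤ G.dist u w + G.dist w v := hG.dist_triangle
      have h3 : G.dist u w ≤ 1 := by
        have := G.dist_le (Walk.cons h Walk.nil)
        simpa using this
      omega
    have he : s(u, w) ∈ G.edgeSet := G.mem_edgeSet.mpr h
    rw [← hcover] at he
    obtain ⟨j₀, hj₀⟩ := Set.mem_iUnion.mp he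
    have hterm : ∀ j : Fin kk,
        ((quotientGraph G (Fs j)).dist (ccm G (Fs j) u) (ccm G (Fs j) v) : ℤ) =
        ((quotientGraph G (Fs j)).dist (ccm G (Fs j) w) (ccm G (Fs j) v) : ℤ) +
          (if j = j₀ then 1 else 0) := by
      intro j
      by_cases hj : j = j₀
      · subst hj
        rw [if_pos rfl]
        -- the key inequality in both directions
        have hdz : G.dist v u = G.dist v w + 1 := by
          have c1 : G.dist v u = G.dist u v := SimpleGraph.dist_comm
          have c2 : G.dist v w = G.dist w v := SimpleGraph.dist_comm
          omega
        have hlow := quotient_dist_key G (Fs j) hG (hF j) h hj₀ hdz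
        have hup : (quotientGraph G (Fs j)).dist (ccm G (Fs j) u) (ccm G (Fs j) v) ≤
            (quotientGraph G (Fs j)).dist (ccm G (Fs j) w) (ccm G (Fs j) v) + 1 := by
          have htri := (quotient_connected G (Fs j) hG).dist_triangle
            (u := ccm G (Fs j) u) (v := ccm G (Fs j) w) (w := ccm G (Fs j) v)
          have h1 : (quotientGraph G (Fs j)).dist (ccm G (Fs j) u) (ccm G (Fs j) w) ≤ 1 := by
            by_cases hccuw : ccm G (Fs j) u = ccm G (Fs j) w
            · rw [hccuw, SimpleGraph.dist_self]; omega
            · have hadj : (quotientGraph G (Fs j)).Adj (ccm G (Fs j) u) (ccm G (Fs j) w) :=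
                ⟨hccuw, u, w, h, rfl, rfl⟩
              have := (quotientGraph G (Fs j)).dist_le (Walk.cons hadj Walk.nil)
              simpa using this
          omega
        push_cast
        omega
      · rw [if_neg hj]
        have hnot : s(u, w) ∉ Fs j := by
          intro hmem
          exact (hdisj j j₀ hj).le_bot ⟨hmem, hj₀⟩
        rw [cc_eq_of_adj_not_mem G (Fs j) h hnot]
        ring
    calc (G.dist u v : ℤ) = (G.dist w v : ℤ) + 1 := by push_cast; omega
      _ = ∑ j : Fin kk,
            ((quotientGraph G (Fs j)).dist (ccm G (Fs j) w) (ccm G (Fs j) v) : ℤ) + 1 := by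
          rw [← IH (n-1) (by omega) w v hqv]
      _ = ∑ j : Fin kk,
            (((quotientGraph G (Fs j)).dist (ccm G (Fs j) w) (ccm G (Fs j) v) : ℤ) +
              (if j = j₀ then 1 else 0)) := by
          rw [Finset.sum_add_distrib, Finset.sum_ite_eq' Finset.univ j₀ (fun _ => (1:ℤ))]
          simp
      _ = _ := by
          apply Finset.sum_congr rfl
          intro j _
          exact (hterm j).symm


/-! ### Orbit counting -/

lemma finite_aut [Fintype V] : Finite (G ≃g G) := by
  have h1 : Finite (V ≃ V) := by
    have : Finite (V → V) := by infer_instance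
    exact Finite.of_injective (fun e => (e : V → V)) fun a b hab => by
      ext x; exact congrFun hab x
  exact Finite.of_injective (fun φ => φ.toEquiv) fun a b hab => by
    ext x; exact congrFun (congrArg (fun (e : V ≃ V) => (e : V → V)) hab) x

lemma mem_orbit_self (u : V) : u ∈ graphOrbit G u := ⟨RelIso.refl _, rfl⟩

lemma orbit_eq_of_mem {u v : V} (h : v ∈ graphOrbit G u) :
    graphOrbit G v = graphOrbit G u := by
  obtain ⟨β, hβ⟩ := h
  ext x
  constructor
  · rintro ⟨α, rfl⟩
    exact ⟨β.trans α, by rw [RelIso.trans_apply, hβ]⟩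
  · rintro ⟨α, rfl⟩
    refine ⟨β.symm.trans α, ?_⟩
    rw [RelIso.trans_apply, ← hβ, RelIso.symm_apply_apply]

section OrbitCount

variable [Fintype V]

open Finset in
lemma fiber_card_eq (u v : V) (h : v ∈ graphOrbit G u) :
    letI := Classical.propDecidable
    letI : Fintype (G ≃g G) := @Fintype.ofFinite _ (finite_aut G)
    (univ.filter (fun α : G ≃g G => α u = v)).card =
      (univ.filter (fun α : G ≃g G => α u = u)).card := by
  classical
  letI : Fintype (G ≃g G) := @Fintype.ofFinite _ (finite_aut G)
  obtain ⟨β, hβ⟩ := h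
  refine Finset.card_bij' (fun α _ => α.trans β.symm) (fun γ _ => γ.trans β)
    ?_ ?_ ?_ ?_
  · intro α hα
    rw [Finset.mem_filter] at hα
    simp only [Finset.mem_filter, Finset.mem_univ, true_and, RelIso.trans_apply]
    rw [hα.2, ← hβ, RelIso.symm_apply_apply]
  · intro γ hγ
    rw [Finset.mem_filter] at hγ
    simp only [Finset.mem_filter, Finset.mem_univ, true_and, RelIso.trans_apply]
    rw [hγ.2, hβ]
  · intro α _
    exact RelIso.ext fun x => by simp
  · intro γ _
    exact RelIso.ext fun x => by simp

end OrbitCount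


open Finset in
lemma key_orbit_sum [Fintype V] (u : V) (S : Finset V) (hS : ↑S = graphOrbit G u) :
    letI : Fintype (G ≃g G) := @Fintype.ofFinite _ (finite_aut G)
    (S.card : ℝ) * ∑ α : G ≃g G, (G.dist u (α u) : ℝ) =
      (Fintype.card (G ≃g G) : ℝ) * ∑ v ∈ S, (G.dist u v : ℝ) := by
  classical
  letI : Fintype (G ≃g G) := @Fintype.ofFinite _ (finite_aut G)
  have hmaps : ∀ α : G ≃g G, α ∈ (univ : Finset (G ≃g G)) → α u ∈ S := by
    intro α _
    have : α u ∈ graphOrbit G u := ⟨α, rfl⟩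
    rwa [← hS] at this
  have hfib : ∀ v ∈ S, (univ.filter (fun α : G ≃g G => α u = v)).card =
      (univ.filter (fun α : G ≃g G => α u = u)).card := by
    intro v hv
    exact fiber_card_eq G u v (by rw [← hS]; exact hv)
  have h1 : ∑ α : G ≃g G, (G.dist u (α u) : ℝ) =
      ((univ.filter (fun α : G ≃g G => α u = u)).card : ℝ) * ∑ v ∈ S, (G.dist u v : ℝ) := by
    rw [← Finset.sum_fiberwise_of_maps_to hmaps (fun α => (G.dist u (α u) : ℝ))]
    rw [Finset.mul_sum]
    apply Finset.sum_congr rfl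
    intro v hv
    have : ∀ α ∈ univ.filter (fun α : G ≃g G => α u = v),
        (G.dist u (α u) : ℝ) = (G.dist u v : ℝ) := by
      intro α hα
      rw [Finset.mem_filter] at hα
      rw [hα.2]
    rw [Finset.sum_congr rfl this, Finset.sum_const, nsmul_eq_mul, hfib v hv]
  have h2 : Fintype.card (G ≃g G) =
      S.card * (univ.filter (fun α : G ≃g G => α u = u)).card := by
    rw [← Finset.card_univ, Finset.card_eq_sum_card_fiberwise hmaps,
      Finset.sum_congr rfl hfib, Finset.sum_const, smul_eq_mul]
  rw [h1, h2]
  push_cast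
  ring

open Finset in
lemma comp_double_sum [Fintype V] (Fj : Set (Sym2 V)) (S : Finset V)
    [Fintype ((G.deleteEdges Fj).ConnectedComponent)] :
    ∑ u ∈ S, ∑ v ∈ S, (((quotientGraph G Fj).dist (ccm G Fj u) (ccm G Fj v) : ℕ) : ℝ) =
      ∑ C : (G.deleteEdges Fj).ConnectedComponent,
        ∑ D : (G.deleteEdges Fj).ConnectedComponent,
          (((S : Set V) ∩ C.supp).ncard : ℝ) * (((S : Set V) ∩ D.supp).ncard : ℝ) *
            ((quotientGraph G Fj).dist C D : ℝ) := by
  classical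
  have hcard : ∀ C : (G.deleteEdges Fj).ConnectedComponent,
      (((S : Set V) ∩ C.supp).ncard : ℝ) = ((S.filter (fun u => ccm G Fj u = C)).card : ℝ) := by
    intro C
    congr 1
    have hset : (S : Set V) ∩ C.supp = ↑(S.filter (fun u => ccm G Fj u = C)) := by
      ext x
      simp only [Set.mem_inter_iff, Finset.coe_filter, Set.mem_setOf_eq, Finset.mem_coe,
        ConnectedComponent.mem_supp_iff]
      exact ⟨fun ⟨h1, h2⟩ => ⟨h1, h2⟩, fun ⟨h1, h2⟩ => ⟨h1, h2⟩⟩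
    rw [hset, Set.ncard_coe_finset]
  have hmaps : ∀ u ∈ S, ccm G Fj u ∈ (univ : Finset ((G.deleteEdges Fj).ConnectedComponent)) :=
    fun u _ => Finset.mem_univ _
  rw [← Finset.sum_fiberwise_of_maps_to hmaps
    (fun u => ∑ v ∈ S, (((quotientGraph G Fj).dist (ccm G Fj u) (ccm G Fj v) : ℕ) : ℝ))]
  apply Finset.sum_congr rfl
  intro C _
  rw [hcard C]
  have hinner : ∀ u ∈ S.filter (fun u => ccm G Fj u = C),
      ∑ v ∈ S, (((quotientGraph G Fj).dist (ccm G Fj u) (ccm G Fj v) : ℕ) : ℝ) =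
      ∑ D : (G.deleteEdges Fj).ConnectedComponent,
        (((S : Set V) ∩ D.supp).ncard : ℝ) * ((quotientGraph G Fj).dist C D : ℝ) := by
    intro u hu
    rw [Finset.mem_filter] at hu
    rw [← Finset.sum_fiberwise_of_maps_to hmaps
      (fun v => (((quotientGraph G Fj).dist (ccm G Fj u) (ccm G Fj v) : ℕ) : ℝ))]
    apply Finset.sum_congr rfl
    intro D _
    rw [hcard D]
    have : ∀ v ∈ S.filter (fun v => ccm G Fj v = D),
        (((quotientGraph G Fj).dist (ccm G Fj u) (ccm G Fj v) : ℕ) : ℝ) =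
        ((quotientGraph G Fj).dist C D : ℝ) := by
      intro v hv
      rw [Finset.mem_filter] at hv
      rw [hu.2, hv.2]
    rw [Finset.sum_congr rfl this, Finset.sum_const, nsmul_eq_mul]
  rw [Finset.sum_congr rfl hinner, Finset.sum_const, nsmul_eq_mul, Finset.mul_sum]
  apply Finset.sum_congr rfl
  intro D _
  ring

end GPaux

/-- Let `G` be a finite connected graph, let `Vo 0, …, Vo (t-1)` be
(an enumeration without repetitions of) the orbits of the natural action of `Aut(G)`
on `V(G)`, and let `{F 0, …, F (k-1)}` be a partition of `E(G)` coarser than the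
Θ*-partition. Then
`Ŵ(G) = |V(G)| ∑_i (1/|V_i|) ∑_j W(G/F_j, w_{ij})`, where `w_{ij}(C) = |V_i ∩ C|`
for every connected component `C` of `G - F j`. -/
theorem graovacPisanski_eq_sum_weightedWiener [Fintype V] (G : SimpleGraph V)
    (hG : G.Connected) (t k : ℕ)
    (Vo : Fin t → Set V)
    (hVo : ∀ i, ∃ u, Vo i = graphOrbit G u)
    (hVo' : ∀ u, ∃ i, graphOrbit G u = Vo i)
    (hVoInj : Function.Injective Vo)
    (F : Fin k → Set (Sym2 V))
    (hne : ∀ j, (F j).Nonempty)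
    (hdisj : ∀ j j', j ≠ j' → Disjoint (F j) (F j'))
    (hcover : ⋃ j, F j = G.edgeSet)
    (hcoarse : ∀ j, ∀ e ∈ F j, ∀ e', thetaStar G e e' → e' ∈ F j) :
    graovacPisanski G = (Fintype.card V : ℝ) *
      ∑ i : Fin t, (1 / ((Vo i).ncard : ℝ)) *
        ∑ j : Fin k, weightedWiener (quotientGraph G (F j))
          (fun C => ((Vo i ∩ C.supp).ncard : ℝ)) := by
  classical
  letI : Fintype (G ≃g G) := @Fintype.ofFinite _ (GPaux.finite_aut G)
  haveI : ∀ j : Fin k, Finite ((G.deleteEdges (F j)).ConnectedComponent) := by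
    intro j
    infer_instance
  letI instC : ∀ j : Fin k, Fintype ((G.deleteEdges (F j)).ConnectedComponent) :=
    fun j => Fintype.ofFinite _
  have hF : ∀ j, GPaux.ThetaClosed G (F j) :=
    fun j e he f hdw => hcoarse j e he f (Relation.TransGen.single hdw)
  have hNonA : Nonempty (G ≃g G) := ⟨RelIso.refl _⟩
  have hcardA : (Nat.card (G ≃g G) : ℝ) = (Fintype.card (G ≃g G) : ℝ) := by
    rw [Nat.card_eq_fintype_card]
  have hApos : 0 < Fintype.card (G ≃g G) := Fintype.card_pos
  -- orbit finsets
  set Si : Fin t → Finset V := fun i => Finset.univ.filter (· ∈ Vo i) with hSidef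
  have hSi : ∀ i, ↑(Si i) = Vo i := fun i => by ext x; simp [hSidef]
  have hScard : ∀ i, ((Vo i).ncard : ℝ) = ((Si i).card : ℝ) := fun i => by
    rw [← hSi i, Set.ncard_coe_finset]
  have horb : ∀ i, ∀ u ∈ Si i, (↑(Si i) : Set V) = graphOrbit G u := by
    intro i u hu
    rw [hSi]
    obtain ⟨w, hw⟩ := hVo i
    have hu' : u ∈ graphOrbit G w := by
      have : u ∈ Vo i := by simpa [hSidef] using hu
      rwa [hw] at this
    rw [hw]
    exact (GPaux.orbit_eq_of_mem G hu').symm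
  have hSne : ∀ i, (0 : ℝ) < (Si i).card := by
    intro i
    obtain ⟨w, hw⟩ := hVo i
    have : w ∈ Si i := by
      simp only [hSidef, Finset.mem_filter, Finset.mem_univ, true_and]
      rw [hw]
      exact GPaux.mem_orbit_self G w
    have := Finset.card_pos.mpr ⟨w, this⟩
    exact_mod_cast this
  -- partition of the vertex set into orbits
  choose idx hidx using hVo'
  have hmem_iff : ∀ (u : V) (i : Fin t), u ∈ Vo i ↔ idx u = i := by
    intro u i
    constructor
    · intro hu
      obtain ⟨w, hw⟩ := hVo i
      have hu' : u ∈ graphOrbit G w := by rwa [hw] at hu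
      have h1 : graphOrbit G u = Vo i := by
        rw [hw]; exact GPaux.orbit_eq_of_mem G hu'
      exact hVoInj (by rw [← hidx u, h1])
    · intro h
      rw [← h, ← hidx u]
      exact GPaux.mem_orbit_self G u
  have hpart : ∀ f : V → ℝ, ∑ u : V, f u = ∑ i : Fin t, ∑ u ∈ Si i, f u := by
    intro f
    rw [← Finset.sum_fiberwise_of_maps_to (g := idx) (t := Finset.univ)
      (fun u _ => Finset.mem_univ _) f]
    apply Finset.sum_congr rfl
    intro i _
    apply Finset.sum_congr _ (fun _ _ => rfl)
    ext u
    simp only [Finset.mem_filter, Finset.mem_univ, true_and, hSidef]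
    exact (hmem_iff u i).symm
  -- core identity, cast to ℝ
  have hcore : ∀ u v : V, (G.dist u v : ℝ) = ∑ j : Fin k,
      ((quotientGraph G (F j)).dist (GPaux.ccm G (F j) u) (GPaux.ccm G (F j) v) : ℝ) := by
    intro u v
    have h := GPaux.dist_eq_sum_quotient_dist G hG F hdisj hcover hF (G.dist u v) u v rfl
    exact_mod_cast h
  -- rewrite the weighted Wiener index
  have hWW : ∀ i j, weightedWiener (quotientGraph G (F j))
      (fun C => ((Vo i ∩ C.supp).ncard : ℝ)) =
      (1/2) * ∑ u ∈ Si i, ∑ v ∈ Si i,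
        ((quotientGraph G (F j)).dist (GPaux.ccm G (F j) u) (GPaux.ccm G (F j) v) : ℝ) := by
    intro i j
    unfold weightedWiener
    congr 1
    rw [finsum_eq_sum_of_fintype]
    rw [Finset.sum_congr rfl (fun C _ => finsum_eq_sum_of_fintype _)]
    rw [GPaux.comp_double_sum G (F j) (Si i), hSi i]
  -- the double sums
  have hDD : ∀ i, ∑ j : Fin k, weightedWiener (quotientGraph G (F j))
      (fun C => ((Vo i ∩ C.supp).ncard : ℝ)) =
      (1/2) * ∑ u ∈ Si i, ∑ v ∈ Si i, (G.dist u v : ℝ) := by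
    intro i
    rw [Finset.sum_congr rfl (fun j _ => hWW i j), ← Finset.mul_sum]
    congr 1
    rw [Finset.sum_comm]
    apply Finset.sum_congr rfl
    intro u _
    rw [Finset.sum_comm]
    apply Finset.sum_congr rfl
    intro v _
    exact (hcore u v).symm
  -- orbit-stabilizer rewriting of the inner sums
  have hT : ∀ i, ∑ u ∈ Si i, ∑ α : G ≃g G, (G.dist u (α u) : ℝ) =
      (Fintype.card (G ≃g G) : ℝ) / ((Si i).card : ℝ) *
        ∑ u ∈ Si i, ∑ v ∈ Si i, (G.dist u v : ℝ) := by
    intro i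
    rw [Finset.mul_sum]
    apply Finset.sum_congr rfl
    intro u hu
    have hk := GPaux.key_orbit_sum G u (Si i) (horb i u hu)
    have hc : ((Si i).card : ℝ) ≠ 0 := ne_of_gt (hSne i)
    rw [div_mul_eq_mul_div, eq_comm, div_eq_iff hc]
    rw [← hk]
    ring
  -- final assembly
  unfold graovacPisanski
  simp only [finsum_eq_sum_of_fintype]
  rw [hcardA, hpart (fun u => ∑ α : G ≃g G, (G.dist u (α u) : ℝ))]
  rw [Finset.mul_sum, Finset.mul_sum]
  apply Finset.sum_congr rfl
  intro i _
  rw [hT i, hDD i, hScard i]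
  have hc : ((Si i).card : ℝ) ≠ 0 := ne_of_gt (hSne i)
  have hA : (Fintype.card (G ≃g G) : ℝ) ≠ 0 := by
    have : (0:ℝ) < (Fintype.card (G ≃g G) : ℝ) := by exact_mod_cast hApos
    exact ne_of_gt this
  field_simp
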